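/- Let F, G : ℝ → [0,1] be cumulative distribution functions of probability measures on ℝ with finite second moments, and let F⁻¹, G⁻¹ be their (right-continuous) generalized inverses defined by F⁻¹(α) = inf{x : F(x) > α}. Then the 2-Wasserstein distance between the measures equals (∫_0^1 |F⁻¹(α) − G⁻¹(α)|² dα)^{1/2}. -/

import Mathlib

open MeasureTheory Set Filter ProbabilityTheory
open scoped ENNReal NNReal

set_option linter.unusedSectionVars false

noncomputable def qf (μ : Measure ℝ) (α : ℝ) : ℝ :=
  sInf {x | α < (μ (Set.Iic x)).toReal}

section quantile

variable (μ : Measure ℝ) [IsProbabilityMeasure μ]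

lemma qf_set_eq (α : ℝ) : {x | α < (μ (Set.Iic x)).toReal} = {x | α < cdf μ x} := by
  ext x; simp [cdf_eq_real, measureReal_def]

lemma qf_eq (α : ℝ) : qf μ α = sInf {x | α < cdf μ x} := by
  rw [qf, qf_set_eq]

lemma qf_set_nonempty {α : ℝ} (hα : α < 1) : {x | α < cdf μ x}.Nonempty := by
  obtain ⟨x, hx⟩ := ((tendsto_cdf_atTop μ).eventually (eventually_gt_nhds hα)).exists
  exact ⟨x, hx⟩

lemma qf_set_bddBelow {α : ℝ} (hα : 0 < α) : BddBelow {x | α < cdf μ x} := by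
  obtain ⟨x₀, hx₀⟩ := ((tendsto_cdf_atBot μ).eventually (eventually_lt_nhds hα)).exists
  refine ⟨x₀, fun y (hy : α < cdf μ y) => ?_⟩
  by_contra h
  push_neg at h
  exact absurd (((monotone_cdf μ) h.le).trans_lt hx₀) (not_lt.2 hy.le)

/-- If `α < cdf μ t` then `qf μ α ≤ t`. -/
lemma qf_le_of_lt_cdf {α t : ℝ} (hα : 0 < α) (ht : α < cdf μ t) : qf μ α ≤ t := by
  rw [qf_eq]
  exact csInf_le (qf_set_bddBelow μ hα) ht

/-- If `qf μ α ≤ t` then `α ≤ cdf μ t` (uses right-continuity). -/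
lemma le_cdf_of_qf_le {α t : ℝ} (hα0 : 0 < α) (hα1 : α < 1) (h : qf μ α ≤ t) :
    α ≤ cdf μ t := by
  have key : ∀ s, t < s → α < cdf μ s := by
    intro s hs
    obtain ⟨y, hy, hys⟩ := (csInf_lt_iff (qf_set_bddBelow μ hα0)
      (qf_set_nonempty μ hα1)).mp (lt_of_le_of_lt (qf_eq μ α ▸ h) hs)
    exact hy.trans_le ((monotone_cdf μ) hys.le)
  -- right continuity: cdf μ t = limit from the right
  have hrc : ContinuousWithinAt (cdf μ) (Ici t) t := (cdf μ).right_continuous t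
  have : Tendsto (cdf μ) (nhdsWithin t (Ioi t)) (nhds (cdf μ t)) :=
    hrc.tendsto.mono_left (nhdsWithin_mono t Ioi_subset_Ici_self)
  refine ge_of_tendsto this ?_
  filter_upwards [self_mem_nhdsWithin] with s hs
  exact (key s hs).le

end quantile

lemma qf_monotoneOn (μ : Measure ℝ) [IsProbabilityMeasure μ] :
    MonotoneOn (qf μ) (Ioo (0:ℝ) 1) := by
  intro a ha b hb hab
  rw [qf_eq, qf_eq]
  exact csInf_le_csInf (qf_set_bddBelow μ ha.1) (qf_set_nonempty μ hb.2)
    (fun x hx => lt_of_le_of_lt hab hx)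

noncomputable def qd (μ : Measure ℝ) (α : ℝ) : ℝ :=
  if α ∈ Ioo (0:ℝ) 1 then qf μ α else 0

lemma qd_eqOn (μ : Measure ℝ) : EqOn (qd μ) (qf μ) (Ioo (0:ℝ) 1) := by
  intro a ha; simp [qd, ha]

lemma measurable_qd (μ : Measure ℝ) [IsProbabilityMeasure μ] : Measurable (qd μ) := by
  apply measurable_of_Iic
  intro t
  have hA : MeasurableSet (Ioo (0:ℝ) 1 ∩ {α | qf μ α ≤ t}) := by
    apply Set.OrdConnected.measurableSet
    constructor
    rintro x ⟨hx1, hx2⟩ z ⟨hz1, hz2⟩ y hy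
    have hyI : y ∈ Ioo (0:ℝ) 1 := ⟨lt_of_lt_of_le hx1.1 hy.1, lt_of_le_of_lt hy.2 hz1.2⟩
    exact ⟨hyI, le_trans (qf_monotoneOn μ hyI hz1 hy.2) hz2⟩
  have : qd μ ⁻¹' Iic t =
      (Ioo (0:ℝ) 1 ∩ {α | qf μ α ≤ t}) ∪ (if 0 ≤ t then (Ioo (0:ℝ) 1)ᶜ else ∅) := by
    ext a
    by_cases ha : a ∈ Ioo (0:ℝ) 1 <;> by_cases ht : 0 ≤ t <;>
      simp [qd, ha, ht, mem_preimage, Set.mem_Iic]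
  rw [this]
  refine hA.union ?_
  split_ifs
  · exact measurableSet_Ioo.compl
  · exact MeasurableSet.empty

noncomputable def P : Measure ℝ := volume.restrict (Ioo (0:ℝ) 1)

instance : IsProbabilityMeasure P :=
  ⟨by simp [P, Measure.restrict_apply, Real.volume_Ioo]⟩

lemma P_qd_Iic (μ : Measure ℝ) [IsProbabilityMeasure μ] (t : ℝ) :
    P {α | qd μ α ≤ t} = μ (Iic t) := by
  have hc0 : 0 ≤ cdf μ t := cdf_nonneg μ t
  have hc1 : cdf μ t ≤ 1 := cdf_le_one μ t
  have hsub1 : Ioo (0:ℝ) (cdf μ t) ⊆ {α | qd μ α ≤ t} ∩ Ioo (0:ℝ) 1 := by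
    rintro a ⟨ha0, hac⟩
    have haI : a ∈ Ioo (0:ℝ) 1 := ⟨ha0, lt_of_lt_of_le hac hc1⟩
    refine ⟨?_, haI⟩
    show qd μ a ≤ t
    rw [qd_eqOn μ haI]
    exact qf_le_of_lt_cdf μ ha0 hac
  have hsub2 : {α | qd μ α ≤ t} ∩ Ioo (0:ℝ) 1 ⊆ Ioc (0:ℝ) (cdf μ t) := by
    rintro a ⟨ha, haI⟩
    refine ⟨haI.1, ?_⟩
    have : qf μ a ≤ t := by rw [← qd_eqOn μ haI]; exact ha
    exact le_cdf_of_qf_le μ haI.1 haI.2 this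
  have h1 : ENNReal.ofReal (cdf μ t) ≤ P {α | qd μ α ≤ t} := by
    rw [P, Measure.restrict_apply (measurableSet_le (measurable_qd μ) measurable_const)]
    calc ENNReal.ofReal (cdf μ t) = volume (Ioo (0:ℝ) (cdf μ t)) := by
          rw [Real.volume_Ioo, sub_zero]
      _ ≤ _ := measure_mono hsub1
  have h2 : P {α | qd μ α ≤ t} ≤ ENNReal.ofReal (cdf μ t) := by
    rw [P, Measure.restrict_apply (measurableSet_le (measurable_qd μ) measurable_const)]
    calc _ ≤ volume (Ioc (0:ℝ) (cdf μ t)) := measure_mono hsub2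
      _ = ENNReal.ofReal (cdf μ t) := by rw [Real.volume_Ioc, sub_zero]
  have : P {α | qd μ α ≤ t} = ENNReal.ofReal (cdf μ t) := le_antisymm h2 h1
  rw [this, cdf_eq_real, measureReal_def, ENNReal.ofReal_toReal (measure_ne_top μ _)]

lemma map_qd (μ : Measure ℝ) [IsProbabilityMeasure μ] : P.map (qd μ) = μ := by
  have : IsProbabilityMeasure (P.map (qd μ)) :=
    Measure.isProbabilityMeasure_map (measurable_qd μ).aemeasurable
  refine Measure.ext_of_Iic (P.map (qd μ)) μ (fun t => ?_)
  rw [Measure.map_apply (measurable_qd μ) measurableSet_Iic]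
  exact P_qd_Iic μ t

lemma qd_up_closed (μ : Measure ℝ) [IsProbabilityMeasure μ] {a b s : ℝ}
    (ha : a ∈ Ioo (0:ℝ) 1) (hb : b ∈ Ioo (0:ℝ) 1) (hab : a ≤ b) (h : s < qd μ a) :
    s < qd μ b := by
  rw [qd_eqOn μ hb]
  rw [qd_eqOn μ ha] at h
  exact lt_of_lt_of_le h (qf_monotoneOn μ ha hb hab)

lemma P_qd_Ioi (μ : Measure ℝ) [IsProbabilityMeasure μ] (s : ℝ) :
    P {α | s < qd μ α} = μ (Ioi s) := by
  have h1 : {α | s < qd μ α} = {α | qd μ α ≤ s}ᶜ := by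
    ext a; simp [not_le]
  have h2 : (Ioi s : Set ℝ) = (Iic s)ᶜ := by simp
  rw [h1, h2,
    measure_compl (measurableSet_le (measurable_qd μ) measurable_const) (measure_ne_top _ _),
    measure_compl measurableSet_Iic (measure_ne_top _ _),
    P_qd_Iic μ s]
  simp

lemma P_inter_min (μ ν : Measure ℝ) [IsProbabilityMeasure μ] [IsProbabilityMeasure ν]
    (s t : ℝ) :
    P ({α | s < qd μ α} ∩ {α | t < qd ν α}) = min (μ (Ioi s)) (ν (Ioi t)) := by
  set X := {α | s < qd μ α} with hX
  set Y := {α | t < qd ν α} with hY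
  have hXm : MeasurableSet X := measurableSet_lt measurable_const (measurable_qd μ)
  have hYm : MeasurableSet Y := measurableSet_lt measurable_const (measurable_qd ν)
  have htot : X ∩ Ioo (0:ℝ) 1 ⊆ Y ∩ Ioo (0:ℝ) 1 ∨ Y ∩ Ioo (0:ℝ) 1 ⊆ X ∩ Ioo (0:ℝ) 1 := by
    by_cases h : X ∩ Ioo (0:ℝ) 1 ⊆ Y ∩ Ioo (0:ℝ) 1
    · exact Or.inl h
    · right
      obtain ⟨a, haX, haY⟩ := Set.not_subset.mp h
      rintro b ⟨hbY, hbI⟩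
      refine ⟨?_, hbI⟩
      rcases le_total a b with hab | hab
      · exact qd_up_closed μ haX.2 hbI hab haX.1
      · exfalso
        exact haY ⟨qd_up_closed ν hbI haX.2 hab hbY, haX.2⟩
  have hre : ∀ Z : Set ℝ, MeasurableSet Z → P Z = volume (Z ∩ Ioo (0:ℝ) 1) := by
    intro Z hZ; rw [P, Measure.restrict_apply hZ]
  have hinter : P (X ∩ Y) = volume ((X ∩ Ioo (0:ℝ) 1) ∩ (Y ∩ Ioo (0:ℝ) 1)) := by
    rw [hre _ (hXm.inter hYm)]
    congr 1
    ext a; simp only [Set.mem_inter_iff]; tauto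
  rcases htot with hsub | hsub
  · rw [hinter, Set.inter_eq_left.mpr hsub, ← hre _ hXm, P_qd_Ioi μ s]
    have : μ (Ioi s) ≤ ν (Ioi t) := by
      rw [← P_qd_Ioi μ s, ← P_qd_Ioi ν t, hre _ hXm, hre _ hYm]
      exact measure_mono hsub
    exact (min_eq_left this).symm
  · rw [hinter, Set.inter_eq_right.mpr hsub, ← hre _ hYm, P_qd_Ioi ν t]
    have : ν (Ioi t) ≤ μ (Ioi s) := by
      rw [← P_qd_Ioi μ s, ← P_qd_Ioi ν t, hre _ hXm, hre _ hYm]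
      exact measure_mono hsub
    exact (min_eq_right this).symm

/-! ### The chi function -/

noncomputable def chi (s x : ℝ) : ℝ :=
  (if s < x then 1 else 0) - (if s < 0 then 1 else 0)

lemma measurable_chi : Measurable (fun q : ℝ × ℝ => chi q.1 q.2) := by
  have h1 : Measurable (fun q : ℝ × ℝ => if q.1 < q.2 then (1:ℝ) else 0) := by
    exact Measurable.ite (measurableSet_lt measurable_fst measurable_snd)
      measurable_const measurable_const
  have h2 : Measurable (fun q : ℝ × ℝ => if q.1 < (0:ℝ) then (1:ℝ) else 0) := by
    exact Measurable.ite (measurableSet_lt measurable_fst measurable_const)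
      measurable_const measurable_const
  exact h1.sub h2

lemma chi_eq_nonneg {x : ℝ} (hx : 0 ≤ x) (s : ℝ) :
    chi s x = (Ico (0:ℝ) x).indicator (fun _ => (1:ℝ)) s := by
  by_cases h1 : s < x <;> by_cases h2 : s < 0 <;>
    simp [chi, h1, h2, Set.indicator_apply, Set.mem_Ico, not_lt.mp, le_of_lt] <;>
    first
      | (intro h; linarith)
      | linarith

lemma chi_eq_neg {x : ℝ} (hx : x < 0) (s : ℝ) :
    chi s x = - (Ico x (0:ℝ)).indicator (fun _ => (1:ℝ)) s := by
  by_cases h1 : s < x <;> by_cases h2 : s < 0 <;>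
    simp [chi, h1, h2, Set.indicator_apply, Set.mem_Ico, not_lt.mp, le_of_lt] <;>
    first
      | (intro h; linarith)
      | linarith

lemma integral_chi (x : ℝ) : ∫ s, chi s x = x := by
  rcases le_or_gt 0 x with hx | hx
  · rw [show (fun s => chi s x) = (Ico (0:ℝ) x).indicator (fun _ => (1:ℝ)) from
      funext (chi_eq_nonneg hx)]
    rw [integral_indicator measurableSet_Ico]
    simp [Real.volume_Ico, ENNReal.toReal_ofReal hx, hx]
  · rw [show (fun s => chi s x) = fun s => - (Ico x (0:ℝ)).indicator (fun _ => (1:ℝ)) s from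
      funext (chi_eq_neg hx)]
    rw [integral_neg, integral_indicator measurableSet_Ico]
    simp only [integral_const, smul_eq_mul, mul_one, Measure.restrict_apply_univ, Real.volume_Ico, measureReal_def]
    rw [ENNReal.toReal_ofReal (by linarith : (0:ℝ) ≤ 0 - x)]
    ring

lemma lintegral_nnnorm_chi (x : ℝ) :
    ∫⁻ s, ‖chi s x‖₊ ∂volume = ENNReal.ofReal |x| := by
  rcases le_or_gt 0 x with hx | hx
  · have : ∀ s, (‖chi s x‖₊ : ℝ≥0∞) = (Ico (0:ℝ) x).indicator (fun _ => (1:ℝ≥0∞)) s := by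
      intro s
      rw [chi_eq_nonneg hx]
      by_cases h : s ∈ Ico (0:ℝ) x <;> simp [Set.indicator_apply, h]
    simp_rw [this]
    rw [lintegral_indicator measurableSet_Ico _]
    simp [Real.volume_Ico, abs_of_nonneg hx]
  · have : ∀ s, (‖chi s x‖₊ : ℝ≥0∞) = (Ico x (0:ℝ)).indicator (fun _ => (1:ℝ≥0∞)) s := by
      intro s
      rw [chi_eq_neg hx]
      by_cases h : s ∈ Ico x (0:ℝ) <;> simp [Set.indicator_apply, h]
    simp_rw [this]
    rw [lintegral_indicator measurableSet_Ico _]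
    simp [Real.volume_Ico, abs_of_neg hx]

/-! ### Inner integral expansion -/

lemma chi_mul_expand (s t : ℝ) (p : ℝ × ℝ) :
    chi s p.1 * chi t p.2 =
      (Ioi s ×ˢ Ioi t).indicator (fun _ => (1:ℝ)) p
      - (if t < 0 then (1:ℝ) else 0) * (if s < p.1 then (1:ℝ) else 0)
      - (if s < 0 then (1:ℝ) else 0) * (if t < p.2 then (1:ℝ) else 0)
      + (if s < 0 then (1:ℝ) else 0) * (if t < 0 then (1:ℝ) else 0) := by
  by_cases h1 : s < p.1 <;> by_cases h2 : t < p.2 <;> by_cases h3 : s < 0 <;>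
    by_cases h4 : t < 0 <;>
    simp [chi, Set.indicator_apply, Set.mem_prod, Set.mem_Ioi, h1, h2, h3, h4] <;> ring

section coupling

variable {μ ν : Measure ℝ} [IsProbabilityMeasure μ] [IsProbabilityMeasure ν]
variable {γ : Measure (ℝ × ℝ)} [IsProbabilityMeasure γ]

lemma ind_fst_eq (s : ℝ) :
    (fun p : ℝ × ℝ => if s < p.1 then (1:ℝ) else 0)
      = (Prod.fst ⁻¹' Ioi s : Set (ℝ × ℝ)).indicator (fun _ => (1:ℝ)) := by
  funext p; by_cases h : s < p.1 <;> simp [Set.indicator_apply, h]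

lemma ind_snd_eq (t : ℝ) :
    (fun p : ℝ × ℝ => if t < p.2 then (1:ℝ) else 0)
      = (Prod.snd ⁻¹' Ioi t : Set (ℝ × ℝ)).indicator (fun _ => (1:ℝ)) := by
  funext p; by_cases h : t < p.2 <;> simp [Set.indicator_apply, h]

lemma integrable_ind_fst (s : ℝ) :
    Integrable (fun p : ℝ × ℝ => if s < p.1 then (1:ℝ) else 0) γ := by
  rw [ind_fst_eq]
  exact (integrable_const (1:ℝ)).indicator (measurable_fst measurableSet_Ioi)

lemma integrable_ind_snd (t : ℝ) :
    Integrable (fun p : ℝ × ℝ => if t < p.2 then (1:ℝ) else 0) γ := by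
  rw [ind_snd_eq]
  exact (integrable_const (1:ℝ)).indicator (measurable_snd measurableSet_Ioi)

lemma integrable_ind_quad (s t : ℝ) :
    Integrable ((Ioi s ×ˢ Ioi t : Set (ℝ × ℝ)).indicator (fun _ => (1:ℝ))) γ :=
  (integrable_const (1:ℝ)).indicator (measurableSet_Ioi.prod measurableSet_Ioi)

lemma integral_ind_fst (hfst : γ.map Prod.fst = μ) (s : ℝ) :
    ∫ p, (if s < p.1 then (1:ℝ) else 0) ∂γ = (μ (Ioi s)).toReal := by
  rw [ind_fst_eq, integral_indicator_const (1:ℝ) (measurable_fst measurableSet_Ioi)]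
  rw [← hfst, Measure.map_apply measurable_fst measurableSet_Ioi]
  simp
  rfl

lemma integral_ind_snd (hsnd : γ.map Prod.snd = ν) (t : ℝ) :
    ∫ p, (if t < p.2 then (1:ℝ) else 0) ∂γ = (ν (Ioi t)).toReal := by
  rw [ind_snd_eq, integral_indicator_const (1:ℝ) (measurable_snd measurableSet_Ioi)]
  rw [← hsnd, Measure.map_apply measurable_snd measurableSet_Ioi]
  simp
  rfl

lemma integral_ind_quad (s t : ℝ) :
    ∫ p, (Ioi s ×ˢ Ioi t : Set (ℝ × ℝ)).indicator (fun _ => (1:ℝ)) p ∂γ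
      = (γ (Ioi s ×ˢ Ioi t)).toReal := by
  rw [integral_indicator_const (1:ℝ) (measurableSet_Ioi.prod measurableSet_Ioi)]
  simp
  rfl

lemma J_eq (hfst : γ.map Prod.fst = μ) (hsnd : γ.map Prod.snd = ν) (s t : ℝ) :
    ∫ p, chi s p.1 * chi t p.2 ∂γ =
      (γ (Ioi s ×ˢ Ioi t)).toReal
      - (if t < 0 then (1:ℝ) else 0) * (μ (Ioi s)).toReal
      - (if s < 0 then (1:ℝ) else 0) * (ν (Ioi t)).toReal
      + (if s < 0 then (1:ℝ) else 0) * (if t < 0 then (1:ℝ) else 0) := by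
  have hint1 : Integrable (fun p : ℝ × ℝ =>
      (Ioi s ×ˢ Ioi t : Set (ℝ × ℝ)).indicator (fun _ => (1:ℝ)) p) γ :=
    integrable_ind_quad (γ := γ) s t
  have hint2 : Integrable (fun p : ℝ × ℝ =>
      (if t < 0 then (1:ℝ) else 0) * (if s < p.1 then (1:ℝ) else 0)) γ :=
    (integrable_ind_fst (γ := γ) s).const_mul (if t < 0 then (1:ℝ) else 0)
  have hint3 : Integrable (fun p : ℝ × ℝ =>
      (if s < 0 then (1:ℝ) else 0) * (if t < p.2 then (1:ℝ) else 0)) γ :=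
    (integrable_ind_snd (γ := γ) t).const_mul (if s < 0 then (1:ℝ) else 0)
  have hintAB : Integrable (fun p : ℝ × ℝ =>
      (Ioi s ×ˢ Ioi t : Set (ℝ × ℝ)).indicator (fun _ => (1:ℝ)) p
        - (if t < 0 then (1:ℝ) else 0) * (if s < p.1 then (1:ℝ) else 0)) γ :=
    hint1.sub hint2
  have hintABC : Integrable (fun p : ℝ × ℝ =>
      ((Ioi s ×ˢ Ioi t : Set (ℝ × ℝ)).indicator (fun _ => (1:ℝ)) p
        - (if t < 0 then (1:ℝ) else 0) * (if s < p.1 then (1:ℝ) else 0))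
        - (if s < 0 then (1:ℝ) else 0) * (if t < p.2 then (1:ℝ) else 0)) γ :=
    hintAB.sub hint3
  simp_rw [chi_mul_expand s t]
  rw [integral_add hintABC (integrable_const _),
    integral_sub hintAB hint3, integral_sub hint1 hint2,
    integral_ind_quad s t, integral_const_mul, integral_const_mul,
    integral_ind_fst hfst s, integral_ind_snd hsnd t]
  simp

end coupling

/-! ### Fubini step -/

section fubini

variable {γ : Measure (ℝ × ℝ)} [IsProbabilityMeasure γ]

lemma integrable_xy (hx2 : Integrable (fun p : ℝ × ℝ => p.1 ^ 2) γ)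
    (hy2 : Integrable (fun p : ℝ × ℝ => p.2 ^ 2) γ) :
    Integrable (fun p : ℝ × ℝ => p.1 * p.2) γ := by
  have hm : AEStronglyMeasurable (fun p : ℝ × ℝ => p.1 * p.2) γ :=
    (measurable_fst.mul measurable_snd).aestronglyMeasurable
  refine (hx2.add hy2).mono' hm ?_
  filter_upwards with p
  have h := sq_nonneg (|p.1| - |p.2|)
  rw [Real.norm_eq_abs, abs_mul]
  simp only [Pi.add_apply]
  nlinarith [sq_abs p.1, sq_abs p.2, mul_nonneg (abs_nonneg p.1) (abs_nonneg p.2)]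

lemma measurable_Phi :
    Measurable (fun q : (ℝ × ℝ) × (ℝ × ℝ) => chi q.2.1 q.1.1 * chi q.2.2 q.1.2) := by
  have h1 : Measurable (fun q : (ℝ × ℝ) × (ℝ × ℝ) => chi q.2.1 q.1.1) :=
    measurable_chi.comp ((measurable_snd.fst).prodMk (measurable_fst.fst))
  have h2 : Measurable (fun q : (ℝ × ℝ) × (ℝ × ℝ) => chi q.2.2 q.1.2) :=
    measurable_chi.comp ((measurable_snd.snd).prodMk (measurable_fst.snd))
  exact h1.mul h2

lemma integrable_Phi (hxy : Integrable (fun p : ℝ × ℝ => p.1 * p.2) γ) :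
    Integrable (Function.uncurry fun (p : ℝ × ℝ) (z : ℝ × ℝ) => chi z.1 p.1 * chi z.2 p.2)
      (γ.prod (volume.prod volume)) := by
  have hmeas : Measurable
      (Function.uncurry fun (p : ℝ × ℝ) (z : ℝ × ℝ) => chi z.1 p.1 * chi z.2 p.2) :=
    measurable_Phi
  refine ⟨hmeas.aestronglyMeasurable, ?_⟩
  rw [HasFiniteIntegral, lintegral_prod _ (hmeas.enorm.aemeasurable)]
  simp only [Function.uncurry_apply_pair]
  have hinner : ∀ p : ℝ × ℝ,
      (∫⁻ z : ℝ × ℝ, ‖chi z.1 p.1 * chi z.2 p.2‖₊ ∂(volume.prod volume))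
        = ENNReal.ofReal |p.1 * p.2| := by
    intro p
    have : ∀ z : ℝ × ℝ, (‖chi z.1 p.1 * chi z.2 p.2‖₊ : ℝ≥0∞)
        = (‖chi z.1 p.1‖₊ : ℝ≥0∞) * (‖chi z.2 p.2‖₊ : ℝ≥0∞) := by
      intro z; rw [nnnorm_mul, ENNReal.coe_mul]
    simp_rw [this]
    have hm1 : Measurable fun s : ℝ => (‖chi s p.1‖₊ : ℝ≥0∞) :=
      (measurable_chi.comp (measurable_id.prodMk measurable_const)).enorm
    have hm2 : Measurable fun t : ℝ => (‖chi t p.2‖₊ : ℝ≥0∞) :=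
      (measurable_chi.comp (measurable_id.prodMk measurable_const)).enorm
    rw [lintegral_prod_mul hm1.aemeasurable hm2.aemeasurable,
      lintegral_nnnorm_chi, lintegral_nnnorm_chi, ← ENNReal.ofReal_mul (abs_nonneg _),
      ← abs_mul]
  simp only [enorm_eq_nnnorm]
  simp_rw [hinner]
  have := hxy.hasFiniteIntegral
  rw [HasFiniteIntegral] at this
  simp only [Real.enorm_eq_ofReal_abs] at this
  simp_rw [abs_mul, ENNReal.ofReal_mul (abs_nonneg _)] at this
  simp_rw [abs_mul, ENNReal.ofReal_mul (abs_nonneg _)]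
  exact this

lemma integral_xy_eq (hxy : Integrable (fun p : ℝ × ℝ => p.1 * p.2) γ) :
    ∫ p, p.1 * p.2 ∂γ
      = ∫ z : ℝ × ℝ, (∫ p, chi z.1 p.1 * chi z.2 p.2 ∂γ) ∂(volume.prod volume) := by
  have h1 : ∀ p : ℝ × ℝ,
      (∫ z : ℝ × ℝ, chi z.1 p.1 * chi z.2 p.2 ∂(volume.prod volume)) = p.1 * p.2 := by
    intro p
    rw [integral_prod_mul (fun s => chi s p.1) (fun t => chi t p.2),
      integral_chi, integral_chi]
  calc ∫ p, p.1 * p.2 ∂γ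
      = ∫ p : ℝ × ℝ, ∫ z : ℝ × ℝ, chi z.1 p.1 * chi z.2 p.2 ∂(volume.prod volume) ∂γ := by
        congr 1; funext p; rw [h1]
    _ = ∫ z : ℝ × ℝ, (∫ p, chi z.1 p.1 * chi z.2 p.2 ∂γ) ∂(volume.prod volume) :=
        integral_integral_swap (integrable_Phi hxy)

end fubini

/-! ### Comparison of couplings -/

section compare

variable {μ ν : Measure ℝ} [IsProbabilityMeasure μ] [IsProbabilityMeasure ν]

lemma integrable_fst_sq {γ : Measure (ℝ × ℝ)} (hfst : γ.map Prod.fst = μ)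
    (hμ2 : Integrable (fun x => x ^ 2) μ) : Integrable (fun p : ℝ × ℝ => p.1 ^ 2) γ := by
  rw [← hfst] at hμ2
  exact (integrable_map_measure
    (((continuous_pow 2).measurable).aestronglyMeasurable) measurable_fst.aemeasurable).mp hμ2

lemma integrable_snd_sq {γ : Measure (ℝ × ℝ)} (hsnd : γ.map Prod.snd = ν)
    (hν2 : Integrable (fun x => x ^ 2) ν) : Integrable (fun p : ℝ × ℝ => p.2 ^ 2) γ := by
  rw [← hsnd] at hν2
  exact (integrable_map_measure
    (((continuous_pow 2).measurable).aestronglyMeasurable) measurable_snd.aemeasurable).mp hν2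

lemma integral_fst_sq {γ : Measure (ℝ × ℝ)} (hfst : γ.map Prod.fst = μ) :
    ∫ p : ℝ × ℝ, p.1 ^ 2 ∂γ = ∫ x, x ^ 2 ∂μ := by
  rw [← hfst, integral_map measurable_fst.aemeasurable
    (((continuous_pow 2).measurable).aestronglyMeasurable)]

lemma integral_snd_sq {γ : Measure (ℝ × ℝ)} (hsnd : γ.map Prod.snd = ν) :
    ∫ p : ℝ × ℝ, p.2 ^ 2 ∂γ = ∫ x, x ^ 2 ∂ν := by
  rw [← hsnd, integral_map measurable_snd.aemeasurable
    (((continuous_pow 2).measurable).aestronglyMeasurable)]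

lemma integral_xy_mono (γ γ' : Measure (ℝ × ℝ))
    [IsProbabilityMeasure γ] [IsProbabilityMeasure γ']
    (hfst : γ.map Prod.fst = μ) (hsnd : γ.map Prod.snd = ν)
    (hfst' : γ'.map Prod.fst = μ) (hsnd' : γ'.map Prod.snd = ν)
    (hxy : Integrable (fun p : ℝ × ℝ => p.1 * p.2) γ)
    (hxy' : Integrable (fun p : ℝ × ℝ => p.1 * p.2) γ')
    (hquad : ∀ s t, γ (Ioi s ×ˢ Ioi t) ≤ γ' (Ioi s ×ˢ Ioi t)) :
    ∫ p, p.1 * p.2 ∂γ ≤ ∫ p, p.1 * p.2 ∂γ' := by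
  rw [integral_xy_eq hxy, integral_xy_eq hxy']
  have hIJ : Integrable (fun z : ℝ × ℝ => ∫ p, chi z.1 p.1 * chi z.2 p.2 ∂γ)
      (volume.prod volume) := (integrable_Phi hxy).integral_prod_right
  have hIJ' : Integrable (fun z : ℝ × ℝ => ∫ p, chi z.1 p.1 * chi z.2 p.2 ∂γ')
      (volume.prod volume) := (integrable_Phi hxy').integral_prod_right
  refine integral_mono hIJ hIJ' (fun z => ?_)
  show (∫ p, chi z.1 p.1 * chi z.2 p.2 ∂γ) ≤ ∫ p, chi z.1 p.1 * chi z.2 p.2 ∂γ'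
  rw [J_eq hfst hsnd z.1 z.2, J_eq hfst' hsnd' z.1 z.2]
  have h := ENNReal.toReal_mono (measure_ne_top γ' _) (hquad z.1 z.2)
  linarith

lemma cost_expand (γ : Measure (ℝ × ℝ)) [IsProbabilityMeasure γ]
    (hx2 : Integrable (fun p : ℝ × ℝ => p.1 ^ 2) γ)
    (hy2 : Integrable (fun p : ℝ × ℝ => p.2 ^ 2) γ) :
    ∫ p, (p.1 - p.2) ^ 2 ∂γ
      = ∫ p, p.1 ^ 2 ∂γ + ∫ p, p.2 ^ 2 ∂γ - 2 * ∫ p, p.1 * p.2 ∂γ := by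
  have hxy := integrable_xy hx2 hy2
  have hsum : Integrable (fun p : ℝ × ℝ => p.1 ^ 2 + p.2 ^ 2) γ := hx2.add hy2
  have hmul : Integrable (fun p : ℝ × ℝ => 2 * (p.1 * p.2)) γ := hxy.const_mul 2
  have hexp : ∀ p : ℝ × ℝ, (p.1 - p.2) ^ 2 = (p.1 ^ 2 + p.2 ^ 2) - 2 * (p.1 * p.2) := by
    intro p; ring
  simp_rw [hexp]
  rw [integral_sub hsum hmul, integral_add hx2 hy2, integral_const_mul]

end compare

/-! ### Main theorem -/

/-- One-dimensional 2-Wasserstein distance via quantile functions: for probability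
measures `μ, ν` on `ℝ` with finite second moments, with cumulative distribution
functions `F, G` and generalized inverses `F⁻¹(α) = inf{x : F(x) > α}`, the
2-Wasserstein distance (square root of the infimum of `∫ |x−y|² dγ` over couplings
`γ` of `μ` and `ν`) equals `(∫_0^1 |F⁻¹(α) − G⁻¹(α)|² dα)^{1/2}`. -/
theorem wasserstein2_eq_quantile_integral (μ ν : Measure ℝ)
    [IsProbabilityMeasure μ] [IsProbabilityMeasure ν]
    (hμ : Integrable (fun x => x ^ 2) μ) (hν : Integrable (fun x => x ^ 2) ν) :
    Real.sqrt (sInf {w : ℝ | ∃ γ : Measure (ℝ × ℝ), IsProbabilityMeasure γ ∧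
        γ.map Prod.fst = μ ∧ γ.map Prod.snd = ν ∧
        w = ∫ p : ℝ × ℝ, (p.1 - p.2) ^ 2 ∂γ}) =
      Real.sqrt (∫ α in (0:ℝ)..1,
        (sInf {x : ℝ | α < (μ (Set.Iic x)).toReal} -
          sInf {x : ℝ | α < (ν (Set.Iic x)).toReal}) ^ 2) := by
  classical
  set S : Set ℝ := {w : ℝ | ∃ γ : Measure (ℝ × ℝ), IsProbabilityMeasure γ ∧
      γ.map Prod.fst = μ ∧ γ.map Prod.snd = ν ∧
      w = ∫ p : ℝ × ℝ, (p.1 - p.2) ^ 2 ∂γ} with hS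
  set pair : ℝ → ℝ × ℝ := fun α => (qd μ α, qd ν α) with hpair
  have hpairm : Measurable pair := (measurable_qd μ).prodMk (measurable_qd ν)
  set γs : Measure (ℝ × ℝ) := P.map pair with hγs
  haveI hγsP : IsProbabilityMeasure γs := Measure.isProbabilityMeasure_map hpairm.aemeasurable
  have hfsts : γs.map Prod.fst = μ := by
    rw [hγs, Measure.map_map measurable_fst hpairm]
    exact map_qd μ
  have hsnds : γs.map Prod.snd = ν := by
    rw [hγs, Measure.map_map measurable_snd hpairm]
    exact map_qd ν
  have hquads : ∀ s t, γs (Ioi s ×ˢ Ioi t) = min (μ (Ioi s)) (ν (Ioi t)) := by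
    intro s t
    rw [hγs, Measure.map_apply hpairm (measurableSet_Ioi.prod measurableSet_Ioi)]
    have : pair ⁻¹' (Ioi s ×ˢ Ioi t) = {α | s < qd μ α} ∩ {α | t < qd ν α} := by
      ext a; simp [hpair, Set.mem_prod]
    rw [this]
    exact P_inter_min μ ν s t
  have hsm : AEStronglyMeasurable (fun p : ℝ × ℝ => (p.1 - p.2) ^ 2) γs :=
    ((measurable_fst.sub measurable_snd).pow_const 2).aestronglyMeasurable
  have hcost : ∫ p, (p.1 - p.2) ^ 2 ∂γs = ∫ α, (qd μ α - qd ν α) ^ 2 ∂P := by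
    rw [hγs, integral_map hpairm.aemeasurable hsm]
  -- identification of RHS
  have hq : ∀ (m : Measure ℝ) (α : ℝ),
      sInf {x : ℝ | α < (m (Set.Iic x)).toReal} = qf m α := fun _ _ => rfl
  have hRHS : (∫ α in (0:ℝ)..1,
      (sInf {x : ℝ | α < (μ (Set.Iic x)).toReal} -
        sInf {x : ℝ | α < (ν (Set.Iic x)).toReal}) ^ 2)
      = ∫ α, (qd μ α - qd ν α) ^ 2 ∂P := by
    simp_rw [hq]
    rw [intervalIntegral.integral_of_le (zero_le_one), 
      ← Measure.restrict_congr_set Ioo_ae_eq_Ioc]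
    refine setIntegral_congr_fun measurableSet_Ioo (fun α hα => ?_)
    rw [qd_eqOn μ hα, qd_eqOn ν hα]
  -- moments for γs
  have hx2s : Integrable (fun p : ℝ × ℝ => p.1 ^ 2) γs := integrable_fst_sq hfsts hμ
  have hy2s : Integrable (fun p : ℝ × ℝ => p.2 ^ 2) γs := integrable_snd_sq hsnds hν
  have hmem : (∫ p, (p.1 - p.2) ^ 2 ∂γs) ∈ S := ⟨γs, hγsP, hfsts, hsnds, rfl⟩
  have hlb : ∀ w ∈ S, (∫ p, (p.1 - p.2) ^ 2 ∂γs) ≤ w := by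
    rintro w ⟨γ, hprob, hf, hs, rfl⟩
    haveI := hprob
    have hx2 : Integrable (fun p : ℝ × ℝ => p.1 ^ 2) γ := integrable_fst_sq hf hμ
    have hy2 : Integrable (fun p : ℝ × ℝ => p.2 ^ 2) γ := integrable_snd_sq hs hν
    have hquad : ∀ s t, γ (Ioi s ×ˢ Ioi t) ≤ γs (Ioi s ×ˢ Ioi t) := by
      intro s t
      rw [hquads s t]
      refine le_min ?_ ?_
      · calc γ (Ioi s ×ˢ Ioi t) ≤ γ (Prod.fst ⁻¹' Ioi s) :=
            measure_mono (Set.prod_subset_preimage_fst _ _)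
          _ = μ (Ioi s) := by rw [← hf, Measure.map_apply measurable_fst measurableSet_Ioi]
      · calc γ (Ioi s ×ˢ Ioi t) ≤ γ (Prod.snd ⁻¹' Ioi t) :=
            measure_mono (Set.prod_subset_preimage_snd _ _)
          _ = ν (Ioi t) := by rw [← hs, Measure.map_apply measurable_snd measurableSet_Ioi]
    have hmono := integral_xy_mono γ γs hf hs hfsts hsnds
      (integrable_xy hx2 hy2) (integrable_xy hx2s hy2s) hquad
    rw [cost_expand γ hx2 hy2, cost_expand γs hx2s hy2s,
      integral_fst_sq hf, integral_fst_sq hfsts, integral_snd_sq hs, integral_snd_sq hsnds]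
    linarith
  have hbdd : BddBelow S := by
    refine ⟨0, fun w hw => ?_⟩
    obtain ⟨γ, hprob, hf, hs, rfl⟩ := hw
    exact integral_nonneg (fun p => sq_nonneg _)
  have hsinf : sInf S = ∫ p, (p.1 - p.2) ^ 2 ∂γs :=
    le_antisymm (csInf_le hbdd hmem) (le_csInf ⟨_, hmem⟩ hlb)
  rw [hsinf, hcost, hRHS]
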